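/- Let A be a unital C*-algebra, let w₁, …, wₙ ∈ A be pairwise orthogonal partial isometries (wᵢwᵢ*wᵢ = wᵢ; wᵢ*wⱼ = 0 and wᵢwⱼ* = 0 for i ≠ j), and set w = w₁ + ⋯ + wₙ. Let P : A → A be a linear projection (P∘P = P) such that for every index i the following commutation relations hold: P₂(wᵢ)P = P₂(wᵢ)PP₂(wᵢ); PP₂(wᵢ) = PP₂(wᵢ)P; PP₀(wᵢ) = P₀(wᵢ)PP₀(wᵢ) = PP₀(wᵢ)P; PP₁(wᵢ) = PP₁(wᵢ)P; and P₁(wᵢ)PP₀(wᵢ) = 0. Then the same relations hold for w in the Peirce-2 form: P₂(w)P = P₂(w)PP₂(w) and PP₂(w) = PP₂(w)P. -/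
import Mathlib


variable {A : Type*} [CStarAlgebra A]

/-- The Peirce 2-projection of a partial isometry `u`: `P₂(u)x = uu*xu*u`. -/
def P2 (u x : A) : A := u * star u * x * star u * u

/-- The Peirce 0-projection of a partial isometry `u`:
`P₀(u)x = (1 − uu*)x(1 − u*u)`. -/
def P0 (u x : A) : A := (1 - u * star u) * x * (1 - star u * u)

/-- The Peirce 1-projection of a partial isometry `u`: `P₁(u) = I − P₂(u) − P₀(u)`. -/
def P1 (u x : A) : A := x - P2 u x - P0 u x

namespace Stmt16Aux

/-- Two-sided multiplication ("sandwich") operator. -/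
def sw (a b x : A) : A := a * x * b

lemma lift0 {a b : A} (hab : a * b = 0) (t : A) : a * (b * t) = 0 := by
  rw [← mul_assoc, hab, zero_mul]

lemma lift1 {a : A} (ha : a * a = a) (t : A) : a * (a * t) = a * t := by
  rw [← mul_assoc, ha]

lemma sw0 (a b : A) : sw a b (0 : A) = 0 := by simp [sw]

lemma swadd (a b x y : A) : sw a b (x + y) = sw a b x + sw a b y := by
  simp [sw, mul_add, add_mul]

lemma swsub (a b x y : A) : sw a b (x - y) = sw a b x - sw a b y := by
  simp [sw, mul_sub, sub_mul]

lemma P2_eq (u x : A) : P2 u x = sw (u * star u) (star u * u) x := by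
  simp [P2, sw, mul_assoc]

lemma P0_eq (u x : A) : P0 u x = sw (1 - u * star u) (1 - star u * u) x := rfl

lemma P1_eq (u x : A) :
    P1 u x = x - sw (u * star u) (star u * u) x
      - sw (1 - u * star u) (1 - star u * u) x := by
  rw [P1, P2_eq, P0_eq]

/-- The commutation relations of a linear projection `P` with the Peirce projections
of a partial isometry `u`. -/
def Rel (P : A →ₗ[ℂ] A) (u : A) : Prop :=
  (∀ x, P2 u (P x) = P2 u (P (P2 u x))) ∧
  (∀ x, P (P2 u x) = P (P2 u (P x))) ∧
  (∀ x, P (P0 u x) = P0 u (P (P0 u x))) ∧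
  (∀ x, P (P0 u x) = P (P0 u (P x))) ∧
  (∀ x, P (P1 u x) = P (P1 u (P x))) ∧
  (∀ x, P1 u (P (P0 u x)) = 0)

lemma rel_zero (P : A →ₗ[ℂ] A) (hproj : ∀ x, P (P x) = P x) : Rel P 0 := by
  refine ⟨?_, ?_, ?_, ?_, ?_, ?_⟩ <;> intro x <;>
    simp [P2, P0, P1, hproj]

section Ring

variable {e f g h : A}
variable (he : e*e = e) (hf : f*f = f) (hg : g*g = g) (hh : h*h = h)
variable (heg : e*g = 0) (hge : g*e = 0) (hfh : f*h = 0) (hhf : h*f = 0)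

include he hf hg hh heg hge hfh hhf

lemma rZw (t : A) :
    sw (1-(e+g)) (1-(f+h)) t = sw (1-e) (1-f) (sw (1-g) (1-h) t) := by
  simp only [sw, mul_sub, sub_mul, mul_add, add_mul, mul_one, one_mul, mul_assoc,
    lift1 he, lift1 hf, lift1 hg, lift1 hh, lift0 heg, lift0 hge, lift0 hfh, lift0 hhf,
    he, hf, hg, hh, heg, hge, hfh, hhf, mul_zero, zero_mul, add_zero, zero_add,
    sub_zero, zero_sub]
  all_goals abel

lemma rZw' (t : A) :
    sw (1-(e+g)) (1-(f+h)) t = sw (1-g) (1-h) (sw (1-e) (1-f) t) := by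
  simp only [sw, mul_sub, sub_mul, mul_add, add_mul, mul_one, one_mul, mul_assoc,
    lift1 he, lift1 hf, lift1 hg, lift1 hh, lift0 heg, lift0 hge, lift0 hfh, lift0 hhf,
    he, hf, hg, hh, heg, hge, hfh, hhf, mul_zero, zero_mul, add_zero, zero_add,
    sub_zero, zero_sub]
  all_goals abel

lemma rDZ (t : A) :
    sw (e+g) (f+h) (sw (1-(e+g)) (1-(f+h)) t) = 0 := by
  simp only [sw, mul_sub, sub_mul, mul_add, add_mul, mul_one, one_mul, mul_assoc,
    lift1 he, lift1 hf, lift1 hg, lift1 hh, lift0 heg, lift0 hge, lift0 hfh, lift0 hhf,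
    he, hf, hg, hh, heg, hge, hfh, hhf, mul_zero, zero_mul, add_zero, zero_add,
    sub_zero, zero_sub]
  all_goals abel

lemma rDuZw (t : A) :
    sw e f (sw (1-(e+g)) (1-(f+h)) t) = 0 := by
  simp only [sw, mul_sub, sub_mul, mul_add, add_mul, mul_one, one_mul, mul_assoc,
    lift1 he, lift1 hf, lift1 hg, lift1 hh, lift0 heg, lift0 hge, lift0 hfh, lift0 hhf,
    he, hf, hg, hh, heg, hge, hfh, hhf, mul_zero, zero_mul, add_zero, zero_add,
    sub_zero, zero_sub]
  all_goals abel

lemma rDvZw (t : A) :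
    sw g h (sw (1-(e+g)) (1-(f+h)) t) = 0 := by
  simp only [sw, mul_sub, sub_mul, mul_add, add_mul, mul_one, one_mul, mul_assoc,
    lift1 he, lift1 hf, lift1 hg, lift1 hh, lift0 heg, lift0 hge, lift0 hfh, lift0 hhf,
    he, hf, hg, hh, heg, hge, hfh, hhf, mul_zero, zero_mul, add_zero, zero_add,
    sub_zero, zero_sub]
  all_goals abel

lemma rEHZu (t : A) :
    sw e h (sw (1-e) (1-f) t) = 0 := by
  simp only [sw, mul_sub, sub_mul, mul_add, add_mul, mul_one, one_mul, mul_assoc,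
    lift1 he, lift1 hf, lift1 hg, lift1 hh, lift0 heg, lift0 hge, lift0 hfh, lift0 hhf,
    he, hf, hg, hh, heg, hge, hfh, hhf, mul_zero, zero_mul, add_zero, zero_add,
    sub_zero, zero_sub]
  all_goals abel

lemma rGFZu (t : A) :
    sw g f (sw (1-e) (1-f) t) = 0 := by
  simp only [sw, mul_sub, sub_mul, mul_add, add_mul, mul_one, one_mul, mul_assoc,
    lift1 he, lift1 hf, lift1 hg, lift1 hh, lift0 heg, lift0 hge, lift0 hfh, lift0 hhf,
    he, hf, hg, hh, heg, hge, hfh, hhf, mul_zero, zero_mul, add_zero, zero_add,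
    sub_zero, zero_sub]
  all_goals abel

lemma rEHZv (t : A) :
    sw e h (sw (1-g) (1-h) t) = 0 := by
  simp only [sw, mul_sub, sub_mul, mul_add, add_mul, mul_one, one_mul, mul_assoc,
    lift1 he, lift1 hf, lift1 hg, lift1 hh, lift0 heg, lift0 hge, lift0 hfh, lift0 hhf,
    he, hf, hg, hh, heg, hge, hfh, hhf, mul_zero, zero_mul, add_zero, zero_add,
    sub_zero, zero_sub]
  all_goals abel

lemma rGFZv (t : A) :
    sw g f (sw (1-g) (1-h) t) = 0 := by
  simp only [sw, mul_sub, sub_mul, mul_add, add_mul, mul_one, one_mul, mul_assoc,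
    lift1 he, lift1 hf, lift1 hg, lift1 hh, lift0 heg, lift0 hge, lift0 hfh, lift0 hhf,
    he, hf, hg, hh, heg, hge, hfh, hhf, mul_zero, zero_mul, add_zero, zero_add,
    sub_zero, zero_sub]
  all_goals abel

lemma rDuDv (t : A) :
    sw e f (sw g h t) = 0 := by
  simp only [sw, mul_sub, sub_mul, mul_add, add_mul, mul_one, one_mul, mul_assoc,
    lift1 he, lift1 hf, lift1 hg, lift1 hh, lift0 heg, lift0 hge, lift0 hfh, lift0 hhf,
    he, hf, hg, hh, heg, hge, hfh, hhf, mul_zero, zero_mul, add_zero, zero_add,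
    sub_zero, zero_sub]
  all_goals abel

lemma rDuEH (t : A) :
    sw e f (sw e h t) = 0 := by
  simp only [sw, mul_sub, sub_mul, mul_add, add_mul, mul_one, one_mul, mul_assoc,
    lift1 he, lift1 hf, lift1 hg, lift1 hh, lift0 heg, lift0 hge, lift0 hfh, lift0 hhf,
    he, hf, hg, hh, heg, hge, hfh, hhf, mul_zero, zero_mul, add_zero, zero_add,
    sub_zero, zero_sub]
  all_goals abel

lemma rDuGF (t : A) :
    sw e f (sw g f t) = 0 := by
  simp only [sw, mul_sub, sub_mul, mul_add, add_mul, mul_one, one_mul, mul_assoc,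
    lift1 he, lift1 hf, lift1 hg, lift1 hh, lift0 heg, lift0 hge, lift0 hfh, lift0 hhf,
    he, hf, hg, hh, heg, hge, hfh, hhf, mul_zero, zero_mul, add_zero, zero_add,
    sub_zero, zero_sub]
  all_goals abel

lemma rDvDu (t : A) :
    sw g h (sw e f t) = 0 := by
  simp only [sw, mul_sub, sub_mul, mul_add, add_mul, mul_one, one_mul, mul_assoc,
    lift1 he, lift1 hf, lift1 hg, lift1 hh, lift0 heg, lift0 hge, lift0 hfh, lift0 hhf,
    he, hf, hg, hh, heg, hge, hfh, hhf, mul_zero, zero_mul, add_zero, zero_add,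
    sub_zero, zero_sub]
  all_goals abel

lemma rDvEH (t : A) :
    sw g h (sw e h t) = 0 := by
  simp only [sw, mul_sub, sub_mul, mul_add, add_mul, mul_one, one_mul, mul_assoc,
    lift1 he, lift1 hf, lift1 hg, lift1 hh, lift0 heg, lift0 hge, lift0 hfh, lift0 hhf,
    he, hf, hg, hh, heg, hge, hfh, hhf, mul_zero, zero_mul, add_zero, zero_add,
    sub_zero, zero_sub]
  all_goals abel

lemma rDvGF (t : A) :
    sw g h (sw g f t) = 0 := by
  simp only [sw, mul_sub, sub_mul, mul_add, add_mul, mul_one, one_mul, mul_assoc,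
    lift1 he, lift1 hf, lift1 hg, lift1 hh, lift0 heg, lift0 hge, lift0 hfh, lift0 hhf,
    he, hf, hg, hh, heg, hge, hfh, hhf, mul_zero, zero_mul, add_zero, zero_add,
    sub_zero, zero_sub]
  all_goals abel

lemma rQ (t : A) :
    sw e h t + sw g f t = (t - sw g h t - sw (1-g) (1-h) t) - sw e f (t - sw g h t - sw (1-g) (1-h) t) - sw (1-e) (1-f) (t - sw g h t - sw (1-g) (1-h) t) := by
  simp only [sw, mul_sub, sub_mul, mul_add, add_mul, mul_one, one_mul, mul_assoc,
    lift1 he, lift1 hf, lift1 hg, lift1 hh, lift0 heg, lift0 hge, lift0 hfh, lift0 hhf,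
    he, hf, hg, hh, heg, hge, hfh, hhf, mul_zero, zero_mul, add_zero, zero_add,
    sub_zero, zero_sub]
  all_goals abel

lemma rOw (t : A) :
    t - sw (e+g) (f+h) t - sw (1-(e+g)) (1-(f+h)) t = sw (1-g) (1-h) (t - sw e f t - sw (1-e) (1-f) t) + sw (1-e) (1-f) (t - sw g h t - sw (1-g) (1-h) t) := by
  simp only [sw, mul_sub, sub_mul, mul_add, add_mul, mul_one, one_mul, mul_assoc,
    lift1 he, lift1 hf, lift1 hg, lift1 hh, lift0 heg, lift0 hge, lift0 hfh, lift0 hhf,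
    he, hf, hg, hh, heg, hge, hfh, hhf, mul_zero, zero_mul, add_zero, zero_add,
    sub_zero, zero_sub]
  all_goals abel


lemma rDw (t : A) :
    sw (e+g) (f+h) t = sw e f t + sw g h t + (sw e h t + sw g f t) := by
  simp only [sw, mul_add, add_mul]
  abel

lemma rsplit (t s : A) : t - s = (t - s - sw (1-(e+g)) (1-(f+h)) t) + sw (1-(e+g)) (1-(f+h)) t := by
  abel

end Ring

section Core

variable (P : A →ₗ[ℂ] A)
variable {e f g h : A}

/-- Core computation: the commutation relations for two orthogonal partial-isometry
"Peirce data" `(e,f)` and `(g,h)` combine to the relations for `(e+g, f+h)`. -/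
lemma core (hproj : ∀ x, P (P x) = P x)
    (he : e*e = e) (hf : f*f = f) (hg : g*g = g) (hh : h*h = h)
    (heg : e*g = 0) (hge : g*e = 0) (hfh : f*h = 0) (hhf : h*f = 0)
    (u1 : ∀ x, sw e f (P x) = sw e f (P (sw e f x)))
    (u2 : ∀ x, P (sw e f x) = P (sw e f (P x)))
    (u3a : ∀ x, P (sw (1-e) (1-f) x) = sw (1-e) (1-f) (P (sw (1-e) (1-f) x)))
    (u3b : ∀ x, P (sw (1-e) (1-f) x) = P (sw (1-e) (1-f) (P x)))
    (u4 : ∀ x, P (x - sw e f x - sw (1-e) (1-f) x)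
            = P (P x - sw e f (P x) - sw (1-e) (1-f) (P x)))
    (v1 : ∀ x, sw g h (P x) = sw g h (P (sw g h x)))
    (v2 : ∀ x, P (sw g h x) = P (sw g h (P x)))
    (v3a : ∀ x, P (sw (1-g) (1-h) x) = sw (1-g) (1-h) (P (sw (1-g) (1-h) x)))
    (v3b : ∀ x, P (sw (1-g) (1-h) x) = P (sw (1-g) (1-h) (P x)))
    (v4 : ∀ x, P (x - sw g h x - sw (1-g) (1-h) x)
            = P (P x - sw g h (P x) - sw (1-g) (1-h) (P x))) :
    (∀ x, sw (e+g) (f+h) (P x) = sw (e+g) (f+h) (P (sw (e+g) (f+h) x))) ∧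
    (∀ x, P (sw (e+g) (f+h) x) = P (sw (e+g) (f+h) (P x))) ∧
    (∀ x, P (sw (1-(e+g)) (1-(f+h)) x)
        = sw (1-(e+g)) (1-(f+h)) (P (sw (1-(e+g)) (1-(f+h)) x))) ∧
    (∀ x, P (sw (1-(e+g)) (1-(f+h)) x) = P (sw (1-(e+g)) (1-(f+h)) (P x))) ∧
    (∀ x, P (x - sw (e+g) (f+h) x - sw (1-(e+g)) (1-(f+h)) x)
        = P (P x - sw (e+g) (f+h) (P x) - sw (1-(e+g)) (1-(f+h)) (P x))) ∧
    (∀ x, P (sw (1-(e+g)) (1-(f+h)) x)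
          - sw (e+g) (f+h) (P (sw (1-(e+g)) (1-(f+h)) x))
          - sw (1-(e+g)) (1-(f+h)) (P (sw (1-(e+g)) (1-(f+h)) x)) = 0) := by
  have R1 := fun t => rZw (e := e) (f := f) (g := g) (h := h) he hf hg hh heg hge hfh hhf t
  have R1' := fun t => rZw' (e := e) (f := f) (g := g) (h := h) he hf hg hh heg hge hfh hhf t
  have RDZ := fun t => rDZ (e := e) (f := f) (g := g) (h := h) he hf hg hh heg hge hfh hhf t
  have RDuZw := fun t => rDuZw (e := e) (f := f) (g := g) (h := h) he hf hg hh heg hge hfh hhf t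
  have RDvZw := fun t => rDvZw (e := e) (f := f) (g := g) (h := h) he hf hg hh heg hge hfh hhf t
  have REHZu := fun t => rEHZu (e := e) (f := f) (g := g) (h := h) he hf hg hh heg hge hfh hhf t
  have RGFZu := fun t => rGFZu (e := e) (f := f) (g := g) (h := h) he hf hg hh heg hge hfh hhf t
  have REHZv := fun t => rEHZv (e := e) (f := f) (g := g) (h := h) he hf hg hh heg hge hfh hhf t
  have RGFZv := fun t => rGFZv (e := e) (f := f) (g := g) (h := h) he hf hg hh heg hge hfh hhf t
  have RDuDv := fun t => rDuDv (e := e) (f := f) (g := g) (h := h) he hf hg hh heg hge hfh hhf t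
  have RDuEH := fun t => rDuEH (e := e) (f := f) (g := g) (h := h) he hf hg hh heg hge hfh hhf t
  have RDuGF := fun t => rDuGF (e := e) (f := f) (g := g) (h := h) he hf hg hh heg hge hfh hhf t
  have RDvDu := fun t => rDvDu (e := e) (f := f) (g := g) (h := h) he hf hg hh heg hge hfh hhf t
  have RDvEH := fun t => rDvEH (e := e) (f := f) (g := g) (h := h) he hf hg hh heg hge hfh hhf t
  have RDvGF := fun t => rDvGF (e := e) (f := f) (g := g) (h := h) he hf hg hh heg hge hfh hhf t
  have RQ := fun t => rQ (e := e) (f := f) (g := g) (h := h) he hf hg hh heg hge hfh hhf t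
  have ROw := fun t => rOw (e := e) (f := f) (g := g) (h := h) he hf hg hh heg hge hfh hhf t
  have RDw := fun t => rDw (e := e) (f := f) (g := g) (h := h) he hf hg hh heg hge hfh hhf t
  -- `P (Zw x)` is fixed by `Zu` and by `Zv`:
  have hy1 : ∀ x, P (sw (1-(e+g)) (1-(f+h)) x)
      = sw (1-e) (1-f) (P (sw (1-(e+g)) (1-(f+h)) x)) := by
    intro x
    calc P (sw (1-(e+g)) (1-(f+h)) x)
        = P (sw (1-e) (1-f) (sw (1-g) (1-h) x)) := by rw [R1]
      _ = sw (1-e) (1-f) (P (sw (1-e) (1-f) (sw (1-g) (1-h) x))) := u3a _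
      _ = sw (1-e) (1-f) (P (sw (1-(e+g)) (1-(f+h)) x)) := by rw [← R1]
  have hy2 : ∀ x, P (sw (1-(e+g)) (1-(f+h)) x)
      = sw (1-g) (1-h) (P (sw (1-(e+g)) (1-(f+h)) x)) := by
    intro x
    calc P (sw (1-(e+g)) (1-(f+h)) x)
        = P (sw (1-g) (1-h) (sw (1-e) (1-f) x)) := by rw [R1']
      _ = sw (1-g) (1-h) (P (sw (1-g) (1-h) (sw (1-e) (1-f) x))) := v3a _
      _ = sw (1-g) (1-h) (P (sw (1-(e+g)) (1-(f+h)) x)) := by rw [← R1']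
  -- relation 3a for the sum
  have rel3a : ∀ x, P (sw (1-(e+g)) (1-(f+h)) x)
      = sw (1-(e+g)) (1-(f+h)) (P (sw (1-(e+g)) (1-(f+h)) x)) := by
    intro x
    have step : sw (1-(e+g)) (1-(f+h)) (P (sw (1-(e+g)) (1-(f+h)) x))
        = sw (1-e) (1-f) (sw (1-g) (1-h) (P (sw (1-(e+g)) (1-(f+h)) x))) := R1 _
    rw [step, ← hy2 x, ← hy1 x]
  -- relation 3b for the sum
  have rel3b : ∀ x, P (sw (1-(e+g)) (1-(f+h)) x)
      = P (sw (1-(e+g)) (1-(f+h)) (P x)) := by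
    intro x
    rw [R1 x, u3b (sw (1-g) (1-h) x), v3b x, ← u3b (sw (1-g) (1-h) (P x)), ← R1 (P x)]
  -- relation 2 for the sum
  have hq : ∀ t, P (sw e h t + sw g f t) = P (sw e h (P t) + sw g f (P t)) := by
    intro t
    rw [RQ t, RQ (P t)]
    rw [u4 (t - sw g h t - sw (1-g) (1-h) t)]
    rw [v4 t]
    rw [← u4 (P t - sw g h (P t) - sw (1-g) (1-h) (P t))]
  have rel2 : ∀ x, P (sw (e+g) (f+h) x) = P (sw (e+g) (f+h) (P x)) := by
    intro x
    have L : P (sw (e+g) (f+h) x)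
        = P (sw e f x) + P (sw g h x) + P (sw e h x + sw g f x) := by
      rw [RDw x, map_add, map_add]
    have R : P (sw (e+g) (f+h) (P x))
        = P (sw e f (P x)) + P (sw g h (P x)) + P (sw e h (P x) + sw g f (P x)) := by
      rw [RDw (P x), map_add, map_add]
    rw [L, R, u2 x, v2 x, hq x]
  -- relation 1 for the sum
  have rel1 : ∀ x, sw (e+g) (f+h) (P x) = sw (e+g) (f+h) (P (sw (e+g) (f+h) x)) := by
    intro x
    have c1 : sw e f (P (sw (e+g) (f+h) x)) = sw e f (P x) := by
      rw [RDw x, map_add, map_add, swadd, swadd]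
      have t2 : sw e f (P (sw g h x)) = 0 := by
        rw [u1 (sw g h x), RDuDv x, map_zero, sw0]
      have t3 : sw e f (P (sw e h x + sw g f x)) = 0 := by
        rw [map_add, swadd, u1 (sw e h x), u1 (sw g f x), RDuEH x, RDuGF x,
          map_zero, sw0, add_zero]
      rw [t2, t3, ← u1 x, add_zero, add_zero]
    have c2 : sw g h (P (sw (e+g) (f+h) x)) = sw g h (P x) := by
      rw [RDw x, map_add, map_add, swadd, swadd]
      have t2 : sw g h (P (sw e f x)) = 0 := by
        rw [v1 (sw e f x), RDvDu x, map_zero, sw0]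
      have t3 : sw g h (P (sw e h x + sw g f x)) = 0 := by
        rw [map_add, swadd, v1 (sw e h x), v1 (sw g f x), RDvEH x, RDvGF x,
          map_zero, sw0, add_zero]
      rw [t2, t3, ← v1 x, zero_add, add_zero]
    have hOZ : ∀ x', P x' - P (sw (e+g) (f+h) x')
        = P (x' - sw (e+g) (f+h) x' - sw (1-(e+g)) (1-(f+h)) x')
          + P (sw (1-(e+g)) (1-(f+h)) x') := by
      intro x'
      rw [← map_add, ← map_sub]
      congr 1
      abel
    have c3 : sw e h (P (sw (e+g) (f+h) x)) = sw e h (P x) := by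
      have hdiff : sw e h (P x) - sw e h (P (sw (e+g) (f+h) x)) = 0 := by
        rw [← swsub, hOZ x, swadd]
        have hZ : sw e h (P (sw (1-(e+g)) (1-(f+h)) x)) = 0 := by
          rw [hy1 x]; exact REHZu _
        have hO : sw e h (P (x - sw (e+g) (f+h) x - sw (1-(e+g)) (1-(f+h)) x)) = 0 := by
          rw [ROw x, map_add, swadd]
          rw [v3a (x - sw e f x - sw (1-e) (1-f) x)]
          rw [u3a (x - sw g h x - sw (1-g) (1-h) x)]
          rw [REHZv, REHZu, add_zero]
        rw [hZ, hO, add_zero]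
      exact (sub_eq_zero.mp hdiff).symm
    have c4 : sw g f (P (sw (e+g) (f+h) x)) = sw g f (P x) := by
      have hdiff : sw g f (P x) - sw g f (P (sw (e+g) (f+h) x)) = 0 := by
        rw [← swsub, hOZ x, swadd]
        have hZ : sw g f (P (sw (1-(e+g)) (1-(f+h)) x)) = 0 := by
          rw [hy1 x]; exact RGFZu _
        have hO : sw g f (P (x - sw (e+g) (f+h) x - sw (1-(e+g)) (1-(f+h)) x)) = 0 := by
          rw [ROw x, map_add, swadd]
          rw [v3a (x - sw e f x - sw (1-e) (1-f) x)]
          rw [u3a (x - sw g h x - sw (1-g) (1-h) x)]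
          rw [RGFZv, RGFZu, add_zero]
        rw [hZ, hO, add_zero]
      exact (sub_eq_zero.mp hdiff).symm
    rw [RDw (P x), RDw (P (sw (e+g) (f+h) x)), c1, c2, c3, c4]
  -- relation 4 for the sum
  have rel4 : ∀ x, P (x - sw (e+g) (f+h) x - sw (1-(e+g)) (1-(f+h)) x)
      = P (P x - sw (e+g) (f+h) (P x) - sw (1-(e+g)) (1-(f+h)) (P x)) := by
    intro x
    calc P (x - sw (e+g) (f+h) x - sw (1-(e+g)) (1-(f+h)) x)
        = P x - P (sw (e+g) (f+h) x) - P (sw (1-(e+g)) (1-(f+h)) x) := by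
          rw [map_sub, map_sub]
      _ = P (P x) - P (sw (e+g) (f+h) (P x)) - P (sw (1-(e+g)) (1-(f+h)) (P x)) := by
          rw [hproj x, rel2 x, rel3b x]
      _ = P (P x - sw (e+g) (f+h) (P x) - sw (1-(e+g)) (1-(f+h)) (P x)) := by
          rw [map_sub, map_sub]
  -- relation 5 for the sum
  have rel5 : ∀ x, P (sw (1-(e+g)) (1-(f+h)) x)
      - sw (e+g) (f+h) (P (sw (1-(e+g)) (1-(f+h)) x))
      - sw (1-(e+g)) (1-(f+h)) (P (sw (1-(e+g)) (1-(f+h)) x)) = 0 := by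
    intro x
    have h3 := rel3a x
    have hD : sw (e+g) (f+h) (P (sw (1-(e+g)) (1-(f+h)) x)) = 0 := by
      rw [h3]; exact RDZ _
    rw [hD, ← h3]
    abel
  exact ⟨rel1, rel2, rel3a, rel3b, rel4, rel5⟩

end Core

lemma star_orth_left {u v : A} (h1 : star u * v = 0) : star v * u = 0 := by
  have := congrArg star h1; simpa using this

lemma star_orth_right {u v : A} (h2 : u * star v = 0) : v * star u = 0 := by
  have := congrArg star h2; simpa using this

lemma ww_star {u v : A} (h2 : u * star v = 0) (h2' : v * star u = 0) :
    (u + v) * star (u + v) = u * star u + v * star v := by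
  rw [star_add, mul_add, add_mul, add_mul, h2, h2']
  abel

lemma star_ww {u v : A} (h1 : star u * v = 0) (h1' : star v * u = 0) :
    star (u + v) * (u + v) = star u * u + star v * v := by
  rw [star_add, add_mul, mul_add, mul_add, h1, h1']
  abel

/-- The sum of two orthogonal partial isometries is a partial isometry. -/
lemma pi_add (u v : A) (hu : u * star u * u = u) (hv : v * star v * v = v)
    (h1 : star u * v = 0) (h2 : u * star v = 0) :
    (u + v) * star (u + v) * (u + v) = u + v := by
  have h1' : star v * u = 0 := star_orth_left h1
  have h2' : v * star u = 0 := star_orth_right h2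
  rw [ww_star h2 h2', add_mul, mul_add, mul_add, hu, hv,
    show u * star u * v = 0 from by rw [mul_assoc, h1, mul_zero],
    show v * star v * u = 0 from by rw [mul_assoc, h1', mul_zero]]
  abel

/-- The relations pass to the sum of two orthogonal partial isometries. -/
lemma rel_pair (P : A →ₗ[ℂ] A) (hproj : ∀ x, P (P x) = P x)
    (u v : A) (hu : u * star u * u = u) (hv : v * star v * v = v)
    (h1 : star u * v = 0) (h2 : u * star v = 0)
    (Ru : Rel P u) (Rv : Rel P v) : Rel P (u + v) := by
  obtain ⟨Ru1, Ru2, Ru3a, Ru3b, Ru4, -⟩ := Ru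
  obtain ⟨Rv1, Rv2, Rv3a, Rv3b, Rv4, -⟩ := Rv
  have h1' : star v * u = 0 := star_orth_left h1
  have h2' : v * star u = 0 := star_orth_right h2
  have he : (u * star u) * (u * star u) = u * star u := by
    rw [show (u * star u) * (u * star u) = (u * star u * u) * star u from by noncomm_ring, hu]
  have hf : (star u * u) * (star u * u) = star u * u := by
    rw [show (star u * u) * (star u * u) = star u * (u * star u * u) from by noncomm_ring, hu]
  have hg : (v * star v) * (v * star v) = v * star v := by
    rw [show (v * star v) * (v * star v) = (v * star v * v) * star v from by noncomm_ring, hv]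
  have hh : (star v * v) * (star v * v) = star v * v := by
    rw [show (star v * v) * (star v * v) = star v * (v * star v * v) from by noncomm_ring, hv]
  have heg : (u * star u) * (v * star v) = 0 := by
    rw [show (u * star u) * (v * star v) = u * ((star u * v) * star v) from by noncomm_ring,
      h1, zero_mul, mul_zero]
  have hge : (v * star v) * (u * star u) = 0 := by
    rw [show (v * star v) * (u * star u) = v * ((star v * u) * star u) from by noncomm_ring,
      h1', zero_mul, mul_zero]
  have hfh : (star u * u) * (star v * v) = 0 := by
    rw [show (star u * u) * (star v * v) = star u * ((u * star v) * v) from by noncomm_ring,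
      h2, zero_mul, mul_zero]
  have hhf : (star v * v) * (star u * u) = 0 := by
    rw [show (star v * v) * (star u * u) = star v * ((v * star u) * u) from by noncomm_ring,
      h2', zero_mul, mul_zero]
  have hww := ww_star h2 h2'
  have hww' := star_ww h1 h1'
  have C := core P hproj he hf hg hh heg hge hfh hhf
    (fun x => by simpa only [P2_eq] using Ru1 x)
    (fun x => by simpa only [P2_eq] using Ru2 x)
    (fun x => by simpa only [P0_eq] using Ru3a x)
    (fun x => by simpa only [P0_eq] using Ru3b x)
    (fun x => by simpa only [P1, P2_eq, P0_eq] using Ru4 x)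
    (fun x => by simpa only [P2_eq] using Rv1 x)
    (fun x => by simpa only [P2_eq] using Rv2 x)
    (fun x => by simpa only [P0_eq] using Rv3a x)
    (fun x => by simpa only [P0_eq] using Rv3b x)
    (fun x => by simpa only [P1, P2_eq, P0_eq] using Rv4 x)
  obtain ⟨c1, c2, c3a, c3b, c4, c5⟩ := C
  refine ⟨fun x => ?_, fun x => ?_, fun x => ?_, fun x => ?_, fun x => ?_, fun x => ?_⟩
  · simp only [P2_eq, hww, hww']; exact c1 x
  · simp only [P2_eq, hww, hww']; exact c2 x
  · simp only [P0_eq, hww, hww']; exact c3a x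
  · simp only [P0_eq, hww, hww']; exact c3b x
  · simp only [P1, P2_eq, P0_eq, hww, hww']; exact c4 x
  · simp only [P1, P2_eq, P0_eq, hww, hww']; exact c5 x

/-- Partial sums of a pairwise orthogonal family of partial isometries are
partial isometries satisfying the relations. -/
lemma rel_sum (P : A →ₗ[ℂ] A) (hproj : ∀ x, P (P x) = P x)
    {n : ℕ} (w : Fin n → A)
    (hpi : ∀ i, w i * star (w i) * w i = w i)
    (horth : ∀ i j, i ≠ j → star (w i) * w j = 0 ∧ w i * star (w j) = 0)
    (hrel : ∀ i, Rel P (w i)) (s : Finset (Fin n)) :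
    ((∑ i ∈ s, w i) * star (∑ i ∈ s, w i) * (∑ i ∈ s, w i) = ∑ i ∈ s, w i) ∧
      Rel P (∑ i ∈ s, w i) := by
  induction s using Finset.induction_on with
  | empty =>
      refine ⟨by simp, ?_⟩
      rw [Finset.sum_empty]
      exact rel_zero P hproj
  | @insert a s ha ih =>
      rw [Finset.sum_insert ha]
      have o1 : star (w a) * (∑ i ∈ s, w i) = 0 := by
        rw [Finset.mul_sum]
        exact Finset.sum_eq_zero fun i hi => (horth a i (by rintro rfl; exact ha hi)).1
      have o2 : w a * star (∑ i ∈ s, w i) = 0 := by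
        rw [star_sum, Finset.mul_sum]
        exact Finset.sum_eq_zero fun i hi => (horth a i (by rintro rfl; exact ha hi)).2
      exact ⟨pi_add _ _ (hpi a) ih.1 o1 o2,
        rel_pair P hproj _ _ (hpi a) ih.1 o1 o2 (hrel a) ih.2⟩

end Stmt16Aux

/-- Let `w₁, …, wₙ` be pairwise orthogonal partial isometries in a
unital C*-algebra and `w = w₁ + ⋯ + wₙ`.  If a linear projection `P` satisfies,
for each `i`, the commutation relations
`P₂(wᵢ)P = P₂(wᵢ)PP₂(wᵢ)`, `PP₂(wᵢ) = PP₂(wᵢ)P`,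
`PP₀(wᵢ) = P₀(wᵢ)PP₀(wᵢ) = PP₀(wᵢ)P`, `PP₁(wᵢ) = PP₁(wᵢ)P`, and
`P₁(wᵢ)PP₀(wᵢ) = 0`, then `P₂(w)P = P₂(w)PP₂(w)` and `PP₂(w) = PP₂(w)P`. -/
theorem stmt_16 {n : ℕ} (w : Fin n → A)
    (hpi : ∀ i, w i * star (w i) * w i = w i)
    (horth : ∀ i j, i ≠ j → star (w i) * w j = 0 ∧ w i * star (w j) = 0)
    (P : A →ₗ[ℂ] A) (hproj : ∀ x, P (P x) = P x)
    (h2P : ∀ i x, P2 (w i) (P x) = P2 (w i) (P (P2 (w i) x)))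
    (hP2 : ∀ i x, P (P2 (w i) x) = P (P2 (w i) (P x)))
    (hP0a : ∀ i x, P (P0 (w i) x) = P0 (w i) (P (P0 (w i) x)))
    (hP0b : ∀ i x, P (P0 (w i) x) = P (P0 (w i) (P x)))
    (hP1 : ∀ i x, P (P1 (w i) x) = P (P1 (w i) (P x)))
    (h10 : ∀ i x, P1 (w i) (P (P0 (w i) x)) = 0) :
    (∀ x, P2 (∑ i, w i) (P x) = P2 (∑ i, w i) (P (P2 (∑ i, w i) x))) ∧
    (∀ x, P (P2 (∑ i, w i) x) = P (P2 (∑ i, w i) (P x))) := by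
  have hrel : ∀ i, Stmt16Aux.Rel P (w i) := fun i =>
    ⟨h2P i, hP2 i, hP0a i, hP0b i, hP1 i, h10 i⟩
  obtain ⟨-, R1, R2, -⟩ := Stmt16Aux.rel_sum P hproj w hpi horth hrel Finset.univ
  exact ⟨R1, R2⟩
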